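/- Let p = v₁…v_k be an interesting path, and for each j let i_j be the number of red vertices on the subpath v₁…v_j. Then f(v₁, i₁) = 0; for every j ∈ {1,…,k−1}, f(v_{j+1}, i_{j+1}) ≤ f(v_j, i_j) + x_{v_j}; and if the weights x satisfy the LP constraint that every interesting path has total non-final weight at least 1, then f(v_k, i_k) ≥ 1. Consequently the interval [0,1] is covered by the union of the intervals [f(v_j, i_j), f(v_j, i_j) + x_{v_j}] for j ∈ {1,…,k−1}, i.e., for every t ∈ [0,1] there exists j ∈ {1,…,k−1} with f(v_j, i_j) ≤ t ≤ f(v_j, i_j) + x_{v_j}. -/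

import Mathlib

open scoped ENNReal

/-- Colors of vertices in the circuit DAG. -/
inductive Color where
  | white | blue | red
deriving DecidableEq

variable {V : Type*}

/-- Number of red vertices on a path (given as a list of vertices). -/
def redCount (color : V → Color) (p : List V) : ℕ :=
  (p.filter (fun v => decide (color v = Color.red))).length

/-- Length of a path: the sum of the weights of its non-final vertices. -/
noncomputable def plen (x : V → ℝ≥0∞) (p : List V) : ℝ≥0∞ :=
  (p.dropLast.map x).sum

/-- `p` is a `(v,i)`-interesting path: it starts at a red vertex, ends at `v`, and
traverses exactly `i` red vertices. -/
def VIPath (E : V → V → Prop) (color : V → Color) (v : V) (i : ℕ) (p : List V) : Prop :=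
  ∃ hp : p ≠ [], p.Chain' E ∧ color (p.head hp) = Color.red ∧
    p.getLast hp = v ∧ redCount color p = i

/-- `p` is an interesting path: it starts and ends at red vertices and traverses exactly
`L+1` red vertices. -/
def IntPath (E : V → V → Prop) (color : V → Color) (L : ℕ) (p : List V) : Prop :=
  ∃ hp : p ≠ [], p.Chain' E ∧ color (p.head hp) = Color.red ∧
    color (p.getLast hp) = Color.red ∧ redCount color p = L + 1

/-- `f_i(v)`: the minimum length of a `(v,i)`-interesting path (`∞` if none exists). -/
noncomputable def fval (E : V → V → Prop) (color : V → Color) (x : V → ℝ≥0∞)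
    (v : V) (i : ℕ) : ℝ≥0∞ :=
  sInf (plen x '' {p : List V | VIPath E color v i p})

/-- `δ(u,w)`: the minimum of `x_u + x_{v₂} + ⋯ + x_{v_{k−1}}` over paths `u v₂ … v_{k−1} w`
whose internal vertices `v₂,…,v_{k−1}` are all blue (`∞` if none exists). -/
noncomputable def deltaW (E : V → V → Prop) (color : V → Color) (x : V → ℝ≥0∞)
    (u w : V) : ℝ≥0∞ :=
  sInf (plen x '' {p : List V | ∃ hp : p ≠ [], p.Chain' E ∧ p.head hp = u ∧
    p.getLast hp = w ∧ 2 ≤ p.length ∧ ∀ z ∈ (p.drop 1).dropLast, color z = Color.blue})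

namespace Stmt5Aux

variable {V : Type*} {E : V → V → Prop} {color : V → Color} {x : V → ℝ≥0∞}

lemma redCount_append (color : V → Color) (p q : List V) :
    redCount color (p ++ q) = redCount color p + redCount color q := by
  simp [redCount, List.filter_append]

lemma plen_snoc (x : V → ℝ≥0∞) (q : List V) (hq : q ≠ []) (w : V) :
    plen x (q ++ [w]) = plen x q + x (q.getLast hq) := by
  unfold plen
  rw [List.dropLast_concat]
  conv_lhs => rw [← List.dropLast_append_getLast hq]
  simp

lemma fval_step {v w : V} {i : ℕ} (hE : E v w) :
    fval E color x w (i + redCount color [w]) ≤ fval E color x v i + x v := by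
  simp only [fval]
  rw [ENNReal.sInf_add]
  refine le_iInf₂ fun b hb => ?_
  obtain ⟨q, hq, rfl⟩ := hb
  obtain ⟨hqne, hchain, hhead, hlast, hcount⟩ := hq
  have hmem : VIPath E color w (i + redCount color [w]) (q ++ [w]) := by
    refine ⟨by simp, ?_, ?_, ?_, ?_⟩
    · refine List.IsChain.append hchain (List.isChain_singleton w) ?_
      intro a ha b hb
      simp only [List.head?_cons, Option.mem_def, Option.some.injEq] at hb
      rw [List.getLast?_eq_getLast hqne, Option.mem_def, Option.some.injEq] at ha
      rw [← hb, ← ha, hlast]; exact hE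
    · rwa [List.head_append_left hqne]
    · rw [List.getLast_append_right (by simp : [w] ≠ ([] : List V))]; rfl
    · rw [redCount_append, hcount]
  calc sInf (plen x '' {p : List V | VIPath E color w (i + redCount color [w]) p})
      ≤ plen x (q ++ [w]) := sInf_le ⟨q ++ [w], hmem, rfl⟩
    _ = plen x q + x v := by rw [plen_snoc x q hqne, hlast]

end Stmt5Aux

/-- Lemma 2 of the paper: along an interesting path `p = v₁…v_k`, writing
`i_j` for the number of red vertices on `v₁…v_j`, we have `f(v₁,i₁) = 0`,
`f(v_{j+1},i_{j+1}) ≤ f(v_j,i_j) + x_{v_j}`, and (under the LP constraint) `f(v_k,i_k) ≥ 1`;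
consequently `[0,1]` is covered by the intervals `[f(v_j,i_j), f(v_j,i_j)+x_{v_j}]`,
`j ∈ {1,…,k−1}`. (Indices are 0-based: `v_{j+1} = p.get ⟨j, _⟩`, `i_{j+1} = redCount (p.take (j+1))`.) -/
theorem stmt5 (E : V → V → Prop) (color : V → Color) (L : ℕ) (hL : 1 ≤ L)
    (x : V → ℝ≥0∞) (hx : ∀ v, x v ≤ 1)
    (p : List V) (hne : p ≠ []) (hp : IntPath E color L p) :
    fval E color x (p.head hne) (redCount color (p.take 1)) = 0 ∧
    (∀ (j : ℕ) (hj : j + 1 < p.length),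
      fval E color x (p.get ⟨j + 1, hj⟩) (redCount color (p.take (j + 2))) ≤
        fval E color x (p.get ⟨j, by omega⟩) (redCount color (p.take (j + 1))) +
          x (p.get ⟨j, by omega⟩)) ∧
    ((∀ q : List V, IntPath E color L q → 1 ≤ plen x q) →
      1 ≤ fval E color x (p.getLast hne) (redCount color p)) ∧
    ((∀ q : List V, IntPath E color L q → 1 ≤ plen x q) →
      ∀ t : ℝ≥0∞, t ≤ 1 → ∃ (j : ℕ) (hj : j + 1 < p.length),
        fval E color x (p.get ⟨j, by omega⟩) (redCount color (p.take (j + 1))) ≤ t ∧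
        t ≤ fval E color x (p.get ⟨j, by omega⟩) (redCount color (p.take (j + 1))) +
            x (p.get ⟨j, by omega⟩)) := by
  open Stmt5Aux in
  obtain ⟨_, hchain, hhead, hlastred, hcount⟩ := hp
  -- Part 1
  have h1 : fval E color x (p.head hne) (redCount color (p.take 1)) = 0 := by
    refine le_antisymm ?_ zero_le
    obtain ⟨a, l, rfl⟩ := List.exists_cons_of_ne_nil hne
    have hmem : VIPath E color ((a :: l).head hne) (redCount color ((a :: l).take 1)) [a] := by
      exact ⟨by simp, List.isChain_singleton a, hhead, rfl, by simp [redCount]⟩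
    exact sInf_le ⟨[a], hmem, by simp [plen]⟩
  -- Part 2
  have h2 : ∀ (j : ℕ) (hj : j + 1 < p.length),
      fval E color x (p.get ⟨j + 1, hj⟩) (redCount color (p.take (j + 2))) ≤
        fval E color x (p.get ⟨j, by omega⟩) (redCount color (p.take (j + 1))) +
          x (p.get ⟨j, by omega⟩) := by
    intro j hj
    have hE : E (p.get ⟨j, by omega⟩) (p.get ⟨j + 1, hj⟩) :=
      List.IsChain.getElem hchain j (by omega)
    have hred : redCount color (p.take (j + 2)) =
        redCount color (p.take (j + 1)) + redCount color [p.get ⟨j + 1, hj⟩] := by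
      conv_lhs => rw [show j + 2 = (j+1) + 1 from rfl, ← List.take_concat_get' p (j+1) hj]
      rw [redCount_append]
      rfl
    rw [hred]
    simp only [List.get_eq_getElem]
    exact fval_step hE
  -- Part 3
  have h3 : (∀ q : List V, IntPath E color L q → 1 ≤ plen x q) →
      1 ≤ fval E color x (p.getLast hne) (redCount color p) := by
    intro hLP
    refine le_sInf fun b hb => ?_
    obtain ⟨q, hq, rfl⟩ := hb
    obtain ⟨hqne, hqchain, hqhead, hqlast, hqcount⟩ := hq
    exact hLP q ⟨hqne, hqchain, hqhead, by rw [hqlast]; exact hlastred, by rw [hqcount, hcount]⟩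
  refine ⟨h1, h2, h3, ?_⟩
  -- Part 4
  intro hLP t ht
  have hk2 : 2 ≤ p.length := by
    have := List.length_filter_le (fun v => decide (color v = Color.red)) p
    rw [show (p.filter fun v => decide (color v = Color.red)).length
        = redCount color p from rfl, hcount] at this
    omega
  have fval_congr : ∀ (j j' : ℕ) (hj : j < p.length) (hj' : j' < p.length), j = j' →
      fval E color x (p.get ⟨j, hj⟩) (redCount color (p.take (j + 1))) =
      fval E color x (p.get ⟨j', hj'⟩) (redCount color (p.take (j' + 1))) := by
    rintro j _ _ _ rfl; rfl
  have hge : 1 ≤ fval E color x (p.get ⟨p.length - 1, by omega⟩)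
      (redCount color (p.take (p.length - 1 + 1))) := by
    have e1 : p.getLast hne = p.get ⟨p.length - 1, by omega⟩ := by
      rw [List.getLast_eq_getElem]; rfl
    have e2 : p.take (p.length - 1 + 1) = p := by
      rw [show p.length - 1 + 1 = p.length by omega, List.take_length]
    rw [e2, ← e1]
    exact h3 hLP
  have final : fval E color x (p.get ⟨p.length - 2, by omega⟩)
        (redCount color (p.take (p.length - 2 + 1))) ≤ t →
      ∃ (j : ℕ) (hj : j + 1 < p.length),
        fval E color x (p.get ⟨j, by omega⟩) (redCount color (p.take (j + 1))) ≤ t ∧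
        t ≤ fval E color x (p.get ⟨j, by omega⟩) (redCount color (p.take (j + 1))) +
            x (p.get ⟨j, by omega⟩) := by
    intro hle
    refine ⟨p.length - 2, by omega, hle, ?_⟩
    calc t ≤ 1 := ht
      _ ≤ fval E color x (p.get ⟨p.length - 1, by omega⟩)
            (redCount color (p.take (p.length - 1 + 1))) := hge
      _ = fval E color x (p.get ⟨p.length - 2 + 1, by omega⟩)
            (redCount color (p.take (p.length - 2 + 1 + 1))) :=
        fval_congr _ _ _ _ (by omega)
      _ ≤ _ := h2 (p.length - 2) (by omega)
  have key : ∀ (m j : ℕ) (hj2 : j + 2 ≤ p.length) (hm : p.length - 2 - j ≤ m),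
      fval E color x (p.get ⟨j, by omega⟩) (redCount color (p.take (j + 1))) ≤ t →
      ∃ (j' : ℕ) (hj' : j' + 1 < p.length),
        fval E color x (p.get ⟨j', by omega⟩) (redCount color (p.take (j' + 1))) ≤ t ∧
        t ≤ fval E color x (p.get ⟨j', by omega⟩) (redCount color (p.take (j' + 1))) +
            x (p.get ⟨j', by omega⟩) := by
    intro m
    induction m with
    | zero =>
      intro j hj hm hle
      have : j = p.length - 2 := by omega
      subst this
      exact final hle
    | succ m ih =>
      intro j hj hm hle
      by_cases hcase : j = p.length - 2
      · subst hcase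
        exact final hle
      · by_cases h' : fval E color x (p.get ⟨j + 1, by omega⟩)
            (redCount color (p.take (j + 1 + 1))) ≤ t
        · exact ih (j + 1) (by omega) (by omega) h'
        · refine ⟨j, by omega, hle, ?_⟩
          calc t ≤ fval E color x (p.get ⟨j + 1, by omega⟩)
                (redCount color (p.take (j + 1 + 1))) := (not_le.1 h').le
            _ ≤ _ := h2 j (by omega)
  refine key p.length 0 (by omega) (by omega) ?_
  have e0 : p.get ⟨0, by omega⟩ = p.head hne := by
    obtain ⟨a, l, rfl⟩ := List.exists_cons_of_ne_nil hne; rfl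
  rw [e0]
  exact h1.le.trans (zero_le (a := t))
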